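/- With notation as above, the bracket algebra (B, [·,·]) is a Lie algebra if and only if the induced alternating 3-form J on L̄ (obtained from the Jacobiator J̄ via the identification π^k B ≅ L̄) is identically zero. -/

import Mathlib

open Pointwise

/-- `Rmod R π m` is the quotient ring `R/π^m R`. -/
abbrev Rmod (R : Type) [CommRing R] (π : R) (m : ℕ) : Type :=
  R ⧸ Ideal.span {π ^ m}

section Setup

variable (R : Type) [CommRing R] (π : R) (k : ℕ)
variable (B : Type) [AddCommGroup B] [Module (Rmod R π (k + 1)) B]

/-- The image of `π` in `R_{k+1}`. -/
noncomputable abbrev pbar : Rmod R π (k + 1) := Ideal.Quotient.mk _ π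

/-- The submodule `π^k B` of `B`. -/
noncomputable abbrev pikB : Submodule (Rmod R π (k + 1)) B :=
  (pbar R π k) ^ k • (⊤ : Submodule (Rmod R π (k + 1)) B)

/-- The submodule `π B` of `B`. -/
noncomputable abbrev piB : Submodule (Rmod R π (k + 1)) B :=
  (pbar R π k) • (⊤ : Submodule (Rmod R π (k + 1)) B)

/-- `L = B/π^k B`, the reduction of `B` to a module over `R_k`. -/
noncomputable abbrev Lred := B ⧸ pikB R π k B

/-- `L̄ = B/πB`, the reduction of `B` to a vector space over the residue field. -/
noncomputable abbrev Lbar := B ⧸ piB R π k B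

/-- The reduction map `mod : B → L = B/π^k B`. -/
noncomputable abbrev modk : B →ₗ[Rmod R π (k + 1)] Lred R π k B :=
  (pikB R π k B).mkQ

/-- The reduction map `λ : B → L̄ = B/πB`. -/
noncomputable abbrev lam : B →ₗ[Rmod R π (k + 1)] Lbar R π k B :=
  (piB R π k B).mkQ

/-- `ψ : L̄ → B`, the map sending `x mod πB` to `π^k x`; its (corestriction to `π^k B`)
is the inverse of the canonical isomorphism `χ : π^k B → L̄`. -/
noncomputable def psi : Lbar R π k B →ₗ[Rmod R π (k + 1)] B :=
  Submodule.liftQ _ ((pbar R π k) ^ k • (LinearMap.id : B →ₗ[Rmod R π (k + 1)] B))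
    (by
      intro x hx
      rw [← SetLike.mem_coe, Submodule.coe_pointwise_smul, Set.mem_smul_set] at hx
      obtain ⟨y, -, rfl⟩ := hx
      have h0 : (pbar R π k) ^ k * pbar R π k = 0 := by
        rw [← pow_succ, ← map_pow, Ideal.Quotient.eq_zero_iff_mem]
        exact Ideal.mem_span_singleton_self _
      simp only [LinearMap.mem_ker, LinearMap.smul_apply, LinearMap.id_apply, smul_smul]
      rw [h0, zero_smul])

@[simp] theorem psi_apply (x : B) :
    psi R π k B (lam R π k B x) = ((pbar R π k) ^ k) • x := rfl

end Setup



lemma ring_lemma (R : Type) [CommRing R] [IsDomain R] (π : R) (hπ : π ≠ 0) (k : ℕ)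
    (a : Rmod R π (k + 1)) (h : pbar R π k ^ k * a = 0) :
    ∃ b, a = pbar R π k * b := by
  obtain ⟨r, rfl⟩ := Ideal.Quotient.mk_surjective a
  have h2 : (Ideal.Quotient.mk (Ideal.span {π ^ (k+1)}) (π ^ k * r)) = 0 := by
    rw [map_mul, map_pow]; exact h
  rw [Ideal.Quotient.eq_zero_iff_mem, Ideal.mem_span_singleton] at h2
  obtain ⟨c, hc⟩ := h2
  have hr : r = π * c := by
    apply mul_left_cancel₀ (pow_ne_zero k hπ)
    rw [hc, pow_succ]; ring
  exact ⟨Ideal.Quotient.mk _ c, by rw [hr, map_mul]⟩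

lemma mod_lemma (R : Type) [CommRing R] [IsDomain R] (π : R) (hπ : π ≠ 0) (k : ℕ)
    (B : Type) [AddCommGroup B] [Module (Rmod R π (k + 1)) B]
    [Module.Free (Rmod R π (k + 1)) B] [Module.Finite (Rmod R π (k + 1)) B]
    (x : B) (h : (pbar R π k) ^ k • x = 0) : x ∈ piB R π k B := by
  classical
  let b := Module.Free.chooseBasis (Rmod R π (k + 1)) B
  have hcoord : ∀ i, pbar R π k ^ k * b.repr x i = 0 := by
    intro i
    have : b.repr ((pbar R π k) ^ k • x) i = 0 := by rw [h]; simp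
    simpa using this
  have hd : ∀ i, ∃ d, b.repr x i = pbar R π k * d := fun i =>
    ring_lemma R π hπ k _ (hcoord i)
  choose d hdi using hd
  set y : B := ∑ i, d i • b i with hy
  have hx : x = pbar R π k • y := by
    rw [hy, Finset.smul_sum]
    conv_lhs => rw [← b.sum_repr x]
    refine Finset.sum_congr rfl fun i _ => ?_
    rw [hdi i, mul_smul]
  rw [hx]
  exact Submodule.smul_mem_pointwise_smul y _ _ trivial

lemma psi_injective (R : Type) [CommRing R] [IsDomain R] (π : R) (hπ : π ≠ 0) (k : ℕ)
    (B : Type) [AddCommGroup B] [Module (Rmod R π (k + 1)) B]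
    [Module.Free (Rmod R π (k + 1)) B] [Module.Finite (Rmod R π (k + 1)) B]
    (u : Lbar R π k B) (h : psi R π k B u = 0) : u = 0 := by
  obtain ⟨x, rfl⟩ := Submodule.mkQ_surjective _ u
  rw [psi_apply] at h
  have := mod_lemma R π hπ k B x h
  simpa [Submodule.Quotient.mk_eq_zero] using this

/-- The bracket algebra `(B,[·,·])` (an alternating bracket lifting the Lie
algebra `L = B/π^k B`) is a Lie algebra if and only if the alternating 3-form `J` on
`L̄ = B/πB` induced from its Jacobiator `J̄` via the identification `χ : π^k B ≅ L̄`
(with inverse `ψ`) is identically zero. -/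
theorem stmt_5 (R : Type) [CommRing R] [IsDomain R] [IsDiscreteValuationRing R]
    (π : R) (hπ : Irreducible π) (k : ℕ) (hk : 1 ≤ k)
    (B : Type) [AddCommGroup B] [Module (Rmod R π (k + 1)) B]
    [Module.Free (Rmod R π (k + 1)) B] [Module.Finite (Rmod R π (k + 1)) B]
    (br : B →ₗ[Rmod R π (k + 1)] B →ₗ[Rmod R π (k + 1)] B)
    (halt : ∀ v, br v v = 0)
    (brL : Lred R π k B →ₗ[Rmod R π (k + 1)] Lred R π k B →ₗ[Rmod R π (k + 1)] Lred R π k B)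
    (hlift : ∀ x y : B, modk R π k B (br x y) = brL (modk R π k B x) (modk R π k B y))
    (hjacL : ∀ x y z : Lred R π k B, brL (brL x y) z + brL (brL y z) x + brL (brL z x) y = 0)
    (J : Lbar R π k B →ₗ[Rmod R π (k + 1)] Lbar R π k B →ₗ[Rmod R π (k + 1)]
      Lbar R π k B →ₗ[Rmod R π (k + 1)] Lbar R π k B)
    (hJ : ∀ x y z : B, psi R π k B (J (lam R π k B x) (lam R π k B y) (lam R π k B z)) =
      br (br x y) z + br (br y z) x + br (br z x) y)
    :
    (∀ x y z : B, br (br x y) z + br (br y z) x + br (br z x) y = 0) ↔ J = 0 := by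
  have hπ0 : π ≠ 0 := hπ.ne_zero
  constructor
  · intro h
    refine LinearMap.ext fun u => LinearMap.ext fun v => LinearMap.ext fun w => ?_
    obtain ⟨x, rfl⟩ := Submodule.mkQ_surjective _ u
    obtain ⟨y, rfl⟩ := Submodule.mkQ_surjective _ v
    obtain ⟨z, rfl⟩ := Submodule.mkQ_surjective _ w
    have h2 := hJ x y z
    rw [h x y z] at h2
    simpa using psi_injective R π hπ0 k B _ h2
  · intro h0 x y z
    have h2 := hJ x y z
    rw [h0] at h2
    simpa using h2.symm
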